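/- arXiv:2002.04466 — 2 statements merged into one kernel-verified Lean document; each statement's English description precedes it below -/
import Mathlib

section
/- Let R be a commutative k-algebra and λ ∈ k. Define ∂ : R^ℕ → R^ℕ by ∂(f)_n = f_{n+1}. Then ∂ is a differential operator of weight λ on the algebra R^ℕ of λ-Hurwitz series, i.e., ∂ is k-linear, ∂(fg) = ∂(f)g + f∂(g) + λ∂(f)∂(g) for all f,g ∈ R^ℕ, and ∂(1) = 0. -/
open Finset

/-- The λ-Hurwitz product on sequences. -/
def hmul {K R : Type*} [CommRing K] [CommRing R] [Algebra K R] (lam : K) (f g : ℕ → R) :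
    ℕ → R :=
  fun n => ∑ i ∈ range (n + 1), ∑ j ∈ range (n - i + 1),
    (n.choose i * (n - i).choose j) • (lam ^ i • (f (n - j) * g (i + j)))

/-- The sequence (1,0,0,...), the identity of the Hurwitz series algebra. -/
def hone {R : Type*} [CommRing R] : ℕ → R := fun n => if n = 0 then 1 else 0

/-- The shift operator ∂(f)_n = f_{n+1}. -/
def der {R : Type*} (f : ℕ → R) : ℕ → R := fun n => f (n + 1)

lemma tri_sum {M : Type*} [AddCommMonoid M] (n : ℕ) (F : ℕ → ℕ → M) :
    ∑ i ∈ range (n + 1), ∑ j ∈ range (n - i + 1), F i j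
      = ∑ m ∈ range (n + 1), ∑ i ∈ range (m + 1), F i (m - i) := by
  rw [Finset.sum_sigma', Finset.sum_sigma']
  refine Finset.sum_nbij' (fun p => ⟨p.1 + p.2, p.1⟩) (fun p => ⟨p.2, p.1 - p.2⟩)
    ?_ ?_ ?_ ?_ ?_
  · rintro ⟨i, j⟩ h
    simp only [Finset.mem_sigma, Finset.mem_range] at h ⊢
    omega
  · rintro ⟨m, i⟩ h
    simp only [Finset.mem_sigma, Finset.mem_range] at h ⊢
    omega
  · rintro ⟨i, j⟩ h
    simp [Nat.add_sub_cancel_left]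
  · rintro ⟨m, i⟩ h
    simp only [Finset.mem_sigma, Finset.mem_range] at h
    have : i + (m - i) = m := by omega
    simp [this]
  · rintro ⟨i, j⟩ h
    simp only [Nat.add_sub_cancel_left]

def tee {K R : Type*} [CommRing K] [CommRing R] [Algebra K R] (lam : K) (f : ℕ → R)
    (n m : ℕ) : R :=
  ∑ i ∈ range (m + 1), m.choose i • (lam ^ i • f (n - m + i))
lemma hmul_eq {K R : Type*} [CommRing K] [CommRing R] [Algebra K R] (lam : K)
    (f g : ℕ → R) (n : ℕ) :
    hmul lam f g n = ∑ m ∈ range (n + 1), n.choose m • (g m * tee lam f n m) := by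
  rw [hmul, tri_sum]
  refine Finset.sum_congr rfl fun m hm => ?_
  rw [Finset.mem_range] at hm
  have hmn : m ≤ n := by omega
  rw [tee, Finset.mul_sum, Finset.smul_sum]
  refine Finset.sum_congr rfl fun i hi => ?_
  rw [Finset.mem_range] at hi
  have him : i ≤ m := by omega
  have h1 : i + (m - i) = m := by omega
  have h2 : n - (m - i) = n - m + i := by omega
  have h3 : n.choose i * (n - i).choose (m - i) = n.choose m * m.choose i :=
    (Nat.choose_mul (n := n) him).symm
  rw [h1, h2, h3, mul_smul, mul_comm (g m), smul_mul_assoc, smul_mul_assoc]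

lemma pascal_split {M : Type*} [AddCommMonoid M] (n : ℕ) (a : ℕ → M) :
    ∑ i ∈ range (n + 2), (n + 1).choose i • a i
      = ∑ i ∈ range (n + 1), n.choose i • a i
        + ∑ i ∈ range (n + 1), n.choose i • a (i + 1) := by
  rw [Finset.sum_range_succ' (fun i => (n + 1).choose i • a i) (n + 1)]
  simp only [Nat.choose_succ_succ, Nat.succ_eq_add_one, add_smul, Finset.sum_add_distrib,
    Nat.choose_zero_right, one_smul]
  have : ∑ i ∈ range (n + 1), n.choose (i + 1) • a (i + 1) + a 0
      = ∑ i ∈ range (n + 1), n.choose i • a i := by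
    have h2 := Finset.sum_range_succ' (fun i => n.choose i • a i) (n + 1)
    simp only [Nat.choose_zero_right, one_smul] at h2
    rw [← h2, Finset.sum_range_succ, Nat.choose_succ_self, zero_smul, add_zero]
  rw [add_assoc, this, add_comm]

lemma tee_rec {K R : Type*} [CommRing K] [CommRing R] [Algebra K R] (lam : K) (f : ℕ → R)
    (n m : ℕ) (h : m ≤ n) :
    tee lam f (n + 1) (m + 1) = tee lam f n m + lam • tee lam f (n + 1) m := by
  unfold tee
  have hnm : n + 1 - (m + 1) = n - m := by omega
  have hnm1 : n + 1 - m = n - m + 1 := by omega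
  rw [hnm, hnm1, show m + 1 + 1 = m + 2 from rfl,
    pascal_split m (fun i => lam ^ i • f (n - m + i))]
  congr 1
  rw [Finset.smul_sum]
  refine Finset.sum_congr rfl fun i _ => ?_
  rw [show n - m + (i + 1) = n - m + 1 + i from by omega, pow_succ', mul_smul,
    smul_comm (m.choose i) lam]

/-- ∂ is a differential operator of weight λ. -/
theorem stmt1 {K R : Type*} [CommRing K] [CommRing R] [Algebra K R] (lam : K) :
    (∀ f g : ℕ → R, der (f + g) = der f + der g) ∧
    (∀ (c : K) (f : ℕ → R), der (c • f) = c • der f) ∧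
    (∀ f g : ℕ → R,
      der (hmul lam f g)
        = hmul lam (der f) g + hmul lam f (der g) + lam • hmul lam (der f) (der g)) ∧
    der (hone (R := R)) = 0 := by
  refine ⟨fun f g => rfl, fun c f => rfl, ?_, ?_⟩
  · intro f g
    funext n
    have tf : ∀ m, m ≤ n → tee lam (der f) n m = tee lam f (n + 1) m := by
      intro m hm
      simp only [tee, der]
      refine Finset.sum_congr rfl fun i _ => ?_
      have : n - m + i + 1 = n + 1 - m + i := by omega
      rw [this]
    have hd : ∀ m : ℕ, der g m = g (m + 1) := fun m => rfl
    show hmul lam f g (n + 1) = _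
    simp only [Pi.add_apply, Pi.smul_apply]
    rw [hmul_eq, hmul_eq, hmul_eq, hmul_eq,
      show n + 1 + 1 = n + 2 from rfl,
      pascal_split n (fun m => g m * tee lam f (n + 1) m)]
    have e1 : ∑ m ∈ range (n + 1), n.choose m • (g m * tee lam f (n + 1) m)
        = ∑ m ∈ range (n + 1), n.choose m • (g m * tee lam (der f) n m) := by
      refine Finset.sum_congr rfl fun m hm => ?_
      rw [Finset.mem_range] at hm
      rw [tf m (by omega)]
    have e2 : ∑ m ∈ range (n + 1), n.choose m • (g (m + 1) * tee lam f (n + 1) (m + 1))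
        = ∑ m ∈ range (n + 1), n.choose m • (der g m * tee lam f n m)
          + ∑ m ∈ range (n + 1), lam • n.choose m • (der g m * tee lam (der f) n m) := by
      rw [← Finset.sum_add_distrib]
      refine Finset.sum_congr rfl fun m hm => ?_
      rw [Finset.mem_range] at hm
      rw [tee_rec lam f n m (by omega), mul_add, smul_add, hd, tf m (by omega)]
      congr 1
      rw [mul_smul_comm, smul_comm]
    rw [e1, e2, add_assoc, Finset.smul_sum]
  · funext n
    simp [der, hone]
end

section
/- On the k-algebra A = ⊕_{i∈ℕ} k z_i with product z_m z_n = Σ_{j=0}^{m} C(m+n-j, n) C(n, j) λ^j z_{m+n-j}, the operator d defined by d(z_0) = 0 and d(z_n) = z_{n-1} for n ≥ 1 is a differential operator of weight λ: d(uv) = d(u)v + u d(v) + λ d(u)d(v) for all u, v ∈ A, and d(z_0) = 0. -/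
open Finset

/-- The multiplication on A = ⊕ K z_i determined by
z_m z_n = Σ_{j=0}^{m} C(m+n-j, n) C(n, j) λ^j z_{m+n-j}, extended bilinearly. -/
noncomputable def zmul {K : Type*} [CommRing K] (lam : K) (u v : ℕ →₀ K) : ℕ →₀ K :=
  u.sum fun m a => v.sum fun n b =>
    ∑ j ∈ range (m + 1),
      ((m + n - j).choose n * n.choose j) • Finsupp.single (m + n - j) (a * b * lam ^ j)

/-- The operator d with d(z_0) = 0 and d(z_n) = z_{n-1} for n ≥ 1, extended linearly. -/
noncomputable def dOp {K : Type*} [CommRing K] (u : ℕ →₀ K) : ℕ →₀ K :=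
  u.sum fun i a => if i = 0 then 0 else Finsupp.single (i - 1) a

section Aux

variable {K : Type*} [CommRing K] (lam : K)

lemma dOp_single (i : ℕ) (a : K) :
    dOp (Finsupp.single i a) = if i = 0 then 0 else Finsupp.single (i - 1) a := by
  unfold dOp
  rw [Finsupp.sum_single_index]
  split <;> simp

lemma dOp_zero : dOp (0 : ℕ →₀ K) = 0 := by
  simp [dOp]

lemma dOp_add (u v : ℕ →₀ K) : dOp (u + v) = dOp u + dOp v := by
  unfold dOp
  rw [Finsupp.sum_add_index']
  · intro i; split <;> simp
  · intro i b c; split <;> simp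

lemma dOp_smul (c : K) (u : ℕ →₀ K) : dOp (c • u) = c • dOp u := by
  unfold dOp
  rw [Finsupp.sum_smul_index, Finsupp.smul_sum]
  · apply Finsupp.sum_congr
    intro i _
    split <;> simp [Finsupp.smul_single, smul_eq_mul]
  · intro i; split <;> simp

noncomputable def Dhom (K : Type*) [CommRing K] : (ℕ →₀ K) →+ (ℕ →₀ K) where
  toFun := dOp
  map_zero' := dOp_zero
  map_add' := dOp_add

lemma dOp_finset_sum {ι : Type*} (s : Finset ι) (f : ι → (ℕ →₀ K)) :
    dOp (∑ i ∈ s, f i) = ∑ i ∈ s, dOp (f i) :=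
  map_sum (Dhom K) f s

lemma dOp_nsmul (n : ℕ) (x : ℕ →₀ K) : dOp (n • x) = n • dOp x :=
  map_nsmul (Dhom K) n x

lemma zmul_single_single (m n : ℕ) (a b : K) :
    zmul lam (Finsupp.single m a) (Finsupp.single n b)
      = ∑ j ∈ range (m + 1),
          ((m + n - j).choose n * n.choose j) • Finsupp.single (m + n - j) (a * b * lam ^ j) := by
  unfold zmul
  rw [Finsupp.sum_single_index, Finsupp.sum_single_index]
  · simp
  · rw [Finsupp.sum_single_index] <;> simp

lemma zmul_zero_left (v : ℕ →₀ K) : zmul lam 0 v = 0 := by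
  simp [zmul]

lemma zmul_zero_right (u : ℕ →₀ K) : zmul lam u 0 = 0 := by
  simp [zmul]

lemma zmul_add_left (u₁ u₂ v : ℕ →₀ K) :
    zmul lam (u₁ + u₂) v = zmul lam u₁ v + zmul lam u₂ v := by
  unfold zmul
  rw [Finsupp.sum_add_index']
  · intro m; simp
  · intro m a₁ a₂
    rw [← Finsupp.sum_add]
    apply Finsupp.sum_congr
    intro n _
    rw [← Finset.sum_add_distrib]
    apply Finset.sum_congr rfl
    intro j _
    rw [← smul_add, ← Finsupp.single_add]
    congr 1
    ring

lemma zmul_add_right (u v₁ v₂ : ℕ →₀ K) :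
    zmul lam u (v₁ + v₂) = zmul lam u v₁ + zmul lam u v₂ := by
  unfold zmul
  rw [← Finsupp.sum_add]
  apply Finsupp.sum_congr
  intro m _
  rw [Finsupp.sum_add_index']
  · intro n; simp
  · intro n b₁ b₂
    rw [← Finset.sum_add_distrib]
    apply Finset.sum_congr rfl
    intro j _
    rw [← smul_add, ← Finsupp.single_add]
    congr 1
    ring

lemma zmul_single_zero_right (m : ℕ) (a b : K) :
    zmul lam (Finsupp.single m a) (Finsupp.single 0 b) = Finsupp.single m (a * b) := by
  rw [zmul_single_single]
  rw [Finset.sum_eq_single 0]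
  · simp
  · intro j _ hj
    obtain ⟨j', rfl⟩ := Nat.exists_eq_succ_of_ne_zero hj
    simp
  · simp

lemma zmul_single_zero_left (n : ℕ) (a b : K) :
    zmul lam (Finsupp.single 0 a) (Finsupp.single n b) = Finsupp.single n (a * b) := by
  rw [zmul_single_single, Finset.sum_range_one]
  norm_num

-- the key combinatorial identity
lemma key_nat (M N j : ℕ) (hj : j ≤ M + 1) :
    (M + N + 2 - j).choose (N + 1) * (N + 1).choose j
      = (M + N + 1 - j).choose (N + 1) * (N + 1).choose j
        + (M + N + 1 - j).choose N * N.choose j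
        + (M + N + 1 - j).choose N * ((N + 1).choose j - N.choose j) := by
  have h2 : M + N + 2 - j = (M + N + 1 - j) + 1 := by omega
  rw [h2, Nat.choose_succ_succ]
  have hle : N.choose j ≤ (N + 1).choose j := Nat.choose_le_choose j (Nat.le_succ N)
  obtain ⟨d, hd⟩ := Nat.le.dest hle
  rw [← hd, Nat.add_sub_cancel_left]
  ring

lemma leibniz_single_succ (M N : ℕ) (a b : K) :
    dOp (zmul lam (Finsupp.single (M + 1) a) (Finsupp.single (N + 1) b))
      = zmul lam (Finsupp.single M a) (Finsupp.single (N + 1) b)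
        + zmul lam (Finsupp.single (M + 1) a) (Finsupp.single N b)
        + lam • zmul lam (Finsupp.single M a) (Finsupp.single N b) := by
  rw [zmul_single_single, zmul_single_single, zmul_single_single, zmul_single_single,
    dOp_finset_sum]
  -- LHS
  have hL : ∀ j ∈ range (M + 2),
      dOp (((M + 1 + (N + 1) - j).choose (N + 1) * (N + 1).choose j) •
        Finsupp.single (M + 1 + (N + 1) - j) (a * b * lam ^ j))
      = ((M + N + 2 - j).choose (N + 1) * (N + 1).choose j) •
          Finsupp.single (M + N + 1 - j) (a * b * lam ^ j) := by
    intro j hj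
    rw [Finset.mem_range] at hj
    rw [dOp_nsmul, dOp_single, if_neg (by omega)]
    have h1 : M + 1 + (N + 1) - j = M + N + 2 - j := by omega
    have h2 : M + N + 2 - j - 1 = M + N + 1 - j := by omega
    rw [h1, h2]
  rw [Finset.sum_congr rfl hL]
  -- term 1 : extend to range (M+2)
  have ht1 : (∑ j ∈ range (M + 1),
      ((M + (N + 1) - j).choose (N + 1) * (N + 1).choose j) •
        Finsupp.single (M + (N + 1) - j) (a * b * lam ^ j))
      = ∑ j ∈ range (M + 2),
      ((M + N + 1 - j).choose (N + 1) * (N + 1).choose j) •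
        Finsupp.single (M + N + 1 - j) (a * b * lam ^ j) := by
    symm
    rw [Finset.sum_range_succ]
    have : (M + N + 1 - (M + 1)).choose (N + 1) = 0 := by
      have : M + N + 1 - (M + 1) = N := by omega
      rw [this]
      exact Nat.choose_succ_self N
    rw [this, zero_mul, zero_smul, add_zero]
    apply Finset.sum_congr rfl
    intro j hj
    rw [Finset.mem_range] at hj
    have h1 : M + N + 1 - j = M + (N + 1) - j := by omega
    rw [h1]
  -- term 2 : index rewrite
  have ht2 : (∑ j ∈ range (M + 2),
      ((M + 1 + N - j).choose N * N.choose j) •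
        Finsupp.single (M + 1 + N - j) (a * b * lam ^ j))
      = ∑ j ∈ range (M + 2),
      ((M + N + 1 - j).choose N * N.choose j) •
        Finsupp.single (M + N + 1 - j) (a * b * lam ^ j) := by
    apply Finset.sum_congr rfl
    intro j hj
    have h1 : M + 1 + N - j = M + N + 1 - j := by omega
    rw [h1]
  -- term 3
  have ht3 : (lam • ∑ j ∈ range (M + 1),
      ((M + N - j).choose N * N.choose j) •
        Finsupp.single (M + N - j) (a * b * lam ^ j))
      = ∑ j ∈ range (M + 2),
      ((M + N + 1 - j).choose N * ((N + 1).choose j - N.choose j)) •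
        Finsupp.single (M + N + 1 - j) (a * b * lam ^ j) := by
    symm
    rw [Finset.sum_range_succ']
    simp only [Nat.choose_zero_right, Nat.sub_self, mul_zero, zero_smul, add_zero]
    rw [Finset.smul_sum]
    apply Finset.sum_congr rfl
    intro j hj
    have h1 : M + N + 1 - (j + 1) = M + N - j := by omega
    have h2 : (N + 1).choose (j + 1) - N.choose (j + 1) = N.choose j := by
      rw [Nat.choose_succ_succ, Nat.succ_eq_add_one]
      omega
    rw [h1, h2]
    rw [smul_comm]
    congr 1
    rw [Finsupp.smul_single]
    congr 1
    rw [smul_eq_mul]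
    ring
  rw [ht1, ht2, ht3]
  rw [← Finset.sum_add_distrib, ← Finset.sum_add_distrib]
  apply Finset.sum_congr rfl
  intro j hj
  rw [Finset.mem_range] at hj
  rw [← add_smul, ← add_smul]
  congr 1
  exact key_nat M N j (by omega)

lemma leibniz_single (m n : ℕ) (a b : K) :
    dOp (zmul lam (Finsupp.single m a) (Finsupp.single n b))
      = zmul lam (dOp (Finsupp.single m a)) (Finsupp.single n b)
        + zmul lam (Finsupp.single m a) (dOp (Finsupp.single n b))
        + lam • zmul lam (dOp (Finsupp.single m a)) (dOp (Finsupp.single n b)) := by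
  match m, n with
  | 0, 0 =>
    rw [zmul_single_zero_left, dOp_single, dOp_single, dOp_single, if_pos rfl, if_pos rfl,
      if_pos rfl, zmul_zero_left, zmul_zero_left, zmul_zero_right]
    simp
  | 0, (n + 1) =>
    rw [zmul_single_zero_left, dOp_single, dOp_single, dOp_single,
      if_pos rfl, if_neg (Nat.succ_ne_zero n), if_neg (Nat.succ_ne_zero n)]
    simp [zmul_zero_left, zmul_single_zero_left]
  | (m + 1), 0 =>
    rw [zmul_single_zero_right, dOp_single, dOp_single, dOp_single,
      if_pos rfl, if_neg (Nat.succ_ne_zero m), if_neg (Nat.succ_ne_zero m)]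
    simp [zmul_zero_right, zmul_single_zero_right]
  | (m + 1), (n + 1) =>
    rw [dOp_single, dOp_single, if_neg (Nat.succ_ne_zero m), if_neg (Nat.succ_ne_zero n)]
    simpa using leibniz_single_succ lam m n a b

lemma leibniz (u v : ℕ →₀ K) :
    dOp (zmul lam u v)
      = zmul lam (dOp u) v + zmul lam u (dOp v) + lam • zmul lam (dOp u) (dOp v) := by
  induction u using Finsupp.induction_linear with
  | zero => simp [zmul_zero_left, dOp_zero]
  | add f g hf hg =>
    rw [zmul_add_left, dOp_add, dOp_add, zmul_add_left, zmul_add_left, zmul_add_left,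
      hf, hg]
    module
  | single m a =>
    induction v using Finsupp.induction_linear with
    | zero => simp [zmul_zero_right, dOp_zero]
    | add f g hf hg =>
      rw [zmul_add_right, dOp_add, dOp_add, zmul_add_right, zmul_add_right, zmul_add_right,
        hf, hg]
      module
    | single n b => exact leibniz_single lam m n a b

end Aux

/-- d is a differential operator of weight λ on A: it is K-linear, satisfies the
λ-Leibniz rule, and d(z_0) = 0 (z_0 being the identity of A). -/
theorem stmt7 {K : Type*} [CommRing K] (lam : K) :
    (∀ u v : ℕ →₀ K, dOp (u + v) = dOp u + dOp v) ∧
    (∀ (c : K) (u : ℕ →₀ K), dOp (c • u) = c • dOp u) ∧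
    (dOp (Finsupp.single 0 (1 : K)) = 0) ∧
    (∀ n : ℕ, 1 ≤ n → dOp (Finsupp.single n (1 : K)) = Finsupp.single (n - 1) (1 : K)) ∧
    (∀ u v : ℕ →₀ K,
      dOp (zmul lam u v)
        = zmul lam (dOp u) v + zmul lam u (dOp v) + lam • zmul lam (dOp u) (dOp v)) := by
  refine ⟨dOp_add, dOp_smul, by simp [dOp_single], fun n hn => ?_, leibniz lam⟩
  rw [dOp_single, if_neg (by omega)]
end
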